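/- arXiv:2411.07107 — 2 statements merged into one kernel-verified Lean document; each statement's English description precedes it below -/
import Mathlib

section
/- For the chain WFA A_{d(·,w)} over the tropical semiring constructed from a string w = a_1⋯a_n (with states q_0,...,q_n, match transitions q_{i-1} → q_i scanning a_i with weight 0, substitution transitions q_{i-1} → q_i scanning any b ≠ a_i with weight 1, deletion transitions q_{i-1} → q_i scanning ε with weight 1, insertion self-loops on every state scanning any symbol with weight 1, and only q_n accepting with weight 0), the stringsum of any string u equals the Levenshtein edit distance between u and w. -/
open scoped ENNReal

/-- Costs for the Levenshtein distance (as in Mathlib's former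
`Mathlib/Data/List/EditDistance/Defs.lean`, since removed from Mathlib). -/
structure Levenshtein.Cost (α β δ : Type*) where
  delete : α → δ
  insert : β → δ
  substitute : α → β → δ

/-- The default cost: every deletion, insertion and substitution of a different symbol costs 1. -/
def Levenshtein.defaultCost {α : Type*} [DecidableEq α] : Levenshtein.Cost α α ℕ where
  delete _ := 1
  insert _ := 1
  substitute a b := if a = b then 0 else 1

/-- One step of the dynamic program for `suffixLevenshtein`. -/
def Levenshtein.impl {α β δ : Type*} [AddZeroClass δ] [Min δ] (C : Levenshtein.Cost α β δ)
    (xs : List α) (y : β) (d : {r : List δ // 0 < r.length}) : {r : List δ // 0 < r.length} :=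
  let ⟨ds, w⟩ := d
  xs.zip (ds.zip ds.tail) |>.foldr
    (init := ⟨[C.insert y + ds.getLast (List.ne_nil_of_length_pos w)], by simp⟩)
    (fun ⟨x, d₀, d₁⟩ ⟨r, w⟩ =>
      ⟨min (C.delete x + r[0]) (min (C.insert y + d₀) (C.substitute x y + d₁)) :: r, by simp⟩)

/-- The Levenshtein distances between each suffix of `xs` and `ys`. -/
def suffixLevenshtein {α β δ : Type*} [AddZeroClass δ] [Min δ] (C : Levenshtein.Cost α β δ)
    (xs : List α) (ys : List β) : {r : List δ // 0 < r.length} :=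
  ys.foldr
    (Levenshtein.impl C xs)
    (xs.foldr (init := ⟨[0], by simp⟩) (fun a ⟨r, w⟩ => ⟨(C.delete a + r[0]) :: r, by simp⟩))

/-- The Levenshtein distance between `xs` and `ys` with cost `C`. -/
def levenshtein {α β δ : Type*} [AddZeroClass δ] [Min δ] (C : Levenshtein.Cost α β δ)
    (xs : List α) (ys : List β) : δ :=
  let ⟨r, w⟩ := suffixLevenshtein C xs ys
  r[0]


namespace Levenshtein
variable {α β δ : Type*} [AddZeroClass δ] [Min δ] (C : Levenshtein.Cost α β δ)

theorem impl_cons {x : α} {xs : List α} {y : β} {d : δ} {ds : List δ} {w} (w' : 0 < List.length ds) :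
    impl C (x :: xs) y ⟨d :: ds, w⟩ =
      let ⟨r, w⟩ := impl C xs y ⟨ds, w'⟩
      ⟨min (C.delete x + r[0]) (min (C.insert y + d) (C.substitute x y + ds[0])) :: r, by simp⟩ :=
  match ds, w' with | _ :: _, _ => rfl

theorem impl_length {xs : List α} {y : β} (d : {r : List δ // 0 < r.length}) (w : d.1.length = xs.length + 1) :
    (impl C xs y d).1.length = xs.length + 1 := by
  induction xs generalizing d with
  | nil => rfl
  | cons x xs ih =>
    dsimp [impl]
    match d, w with
    | ⟨d₁ :: d₂ :: ds, _⟩, w =>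
      dsimp
      congr 1
      exact ih ⟨d₂ :: ds, (by simp)⟩ (by simpa using w)

theorem suffixLevenshtein_length (xs : List α) (ys : List β) :
    (suffixLevenshtein C xs ys).1.length = xs.length + 1 := by
  induction ys with
  | nil =>
    dsimp [suffixLevenshtein]
    induction xs with
    | nil => rfl
    | cons _ xs ih => simp_all
  | cons y ys ih =>
    dsimp [suffixLevenshtein]
    rw [impl_length]
    exact ih

theorem suffixLevenshtein_cons₂ (xs : List α) (y ys) :
    suffixLevenshtein C xs (y :: ys) = (impl C xs) y (suffixLevenshtein C xs ys) := rfl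

theorem suffixLevenshtein_cons₁_aux {α} {x y : { r : List α // 0 < r.length }}
    (w₀ : x.1[0]'x.2 = y.1[0]'y.2) (w : x.1.tail = y.1.tail) : x = y := by
  match x, y with
  | ⟨hx :: tx, _⟩, ⟨hy :: ty, _⟩ => simp_all

theorem suffixLevenshtein_cons₁ (x : α) (xs ys) :
    suffixLevenshtein C (x :: xs) ys =
      ⟨levenshtein C (x :: xs) ys :: (suffixLevenshtein C xs ys).1, by simp⟩ := by
  induction ys with
  | nil => rfl
  | cons y ys ih =>
    apply suffixLevenshtein_cons₁_aux
    · rfl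
    · rw [suffixLevenshtein_cons₂ C (x :: xs), ih, impl_cons]
      · rfl
      · simp [suffixLevenshtein_length]

theorem suffixLevenshtein_nil_cons (y : β) (ys) :
    suffixLevenshtein C ([] : List α) (y :: ys) =
      ⟨[C.insert y + levenshtein C [] ys], by simp⟩ := by
  rw [suffixLevenshtein_cons₂]
  have h := suffixLevenshtein_length C ([] : List α) ys
  unfold levenshtein
  generalize suffixLevenshtein C ([] : List α) ys = d at h ⊢
  match d, h with
  | ⟨[r], _⟩, _ => rfl

end Levenshtein

section LevAPI

open Levenshtein

variable {α β δ : Type*} [AddZeroClass δ] [Min δ] (C : Levenshtein.Cost α β δ)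

@[simp] theorem levenshtein_nil_nil : levenshtein C ([] : List α) ([] : List β) = 0 := rfl

@[simp] theorem levenshtein_nil_cons (y : β) (ys : List β) :
    levenshtein C ([] : List α) (y :: ys) = C.insert y + levenshtein C [] ys := by
  conv_lhs => unfold levenshtein
  rw [suffixLevenshtein_nil_cons]
  rfl

@[simp] theorem levenshtein_cons_nil (x : α) (xs : List α) :
    levenshtein C (x :: xs) ([] : List β) = C.delete x + levenshtein C xs [] := rfl

@[simp] theorem levenshtein_cons_cons (x : α) (xs : List α) (y : β) (ys : List β) :
    levenshtein C (x :: xs) (y :: ys) =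
      min (C.delete x + levenshtein C xs (y :: ys))
        (min (C.insert y + levenshtein C (x :: xs) ys) (C.substitute x y + levenshtein C xs ys)) := by
  conv_lhs => unfold levenshtein
  rw [suffixLevenshtein_cons₂, suffixLevenshtein_cons₁, impl_cons]
  · have e : levenshtein C xs ys =
        (suffixLevenshtein C xs ys).1[0]'(by simp [suffixLevenshtein_length]) := rfl
    rw [e]
    generalize suffixLevenshtein C xs (y :: ys) = d
    rcases d with ⟨r, w⟩
    rfl

@[simp] theorem Levenshtein.defaultCost_delete [DecidableEq α] (a : α) : (defaultCost : Cost α α ℕ).delete a = 1 := rfl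
@[simp] theorem Levenshtein.defaultCost_insert [DecidableEq α] (a : α) : (defaultCost : Cost α α ℕ).insert a = 1 := rfl
@[simp] theorem Levenshtein.defaultCost_substitute [DecidableEq α] (a b : α) :
    (defaultCost : Cost α α ℕ).substitute a b = if a = b then 0 else 1 := rfl

end LevAPI

namespace Stmt8

/-- A weighted finite automaton over the tropical semiring `(ℝ≥0 ∪ {∞}, min, +, ∞, 0)`.
A missing transition (or non-accepting state) is encoded by weight `∞`. -/
structure WFA (α : Type*) (Q : Type*) where
  trans : Q → Option α → Q → ℝ≥0∞
  start : Q
  accept : Q → ℝ≥0∞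

/-- `M.PathWeight q u w` holds if there is a path of `M` from `q` scanning `u` whose weight
(the sum of its transition weights plus the accept weight of its last state) is `w`. -/
inductive WFA.PathWeight {α Q : Type*} (M : WFA α Q) : Q → List α → ℝ≥0∞ → Prop
  | accept (q : Q) : M.PathWeight q [] (M.accept q)
  | step (q q' : Q) (a : α) (u : List α) (w : ℝ≥0∞) :
      M.PathWeight q' u w → M.PathWeight q (a :: u) (M.trans q (some a) q' + w)
  | eps (q q' : Q) (u : List α) (w : ℝ≥0∞) :
      M.PathWeight q' u w → M.PathWeight q u (M.trans q none q' + w)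

/-- The stringsum of `u`: the minimum over all paths from the start state scanning `u` of
their weights (the empty minimum being `∞`). -/
noncomputable def WFA.stringsum {α Q : Type*} (M : WFA α Q) (u : List α) : ℝ≥0∞ :=
  sInf {w | M.PathWeight M.start u w}

/-- The chain WFA `A_{d(·,w)}` built from a string `w = a_1 ⋯ a_n`: states `q_0, …, q_n`,
match transitions `q_{i-1} → q_i` scanning `a_i` with weight 0, substitution transitions
`q_{i-1} → q_i` scanning any `b ≠ a_i` with weight 1, deletion (`ε`) transitions
`q_{i-1} → q_i` with weight 1, insertion self-loops scanning any symbol with weight 1,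
and only `q_n` accepting, with accept weight 0. -/
noncomputable def chain {α : Type*} [DecidableEq α] (w : List α) : WFA α (Fin (w.length + 1)) where
  start := 0
  accept := fun q => if q = Fin.last w.length then 0 else ⊤
  trans := fun q l q' =>
    match l with
    | some b =>
        if h : (q' : ℕ) = (q : ℕ) + 1 then
          if b = w.get ⟨q, by have := q'.isLt; omega⟩ then 0 else 1
        else if q' = q then 1 else ⊤
    | none => if (q' : ℕ) = (q : ℕ) + 1 then 1 else ⊤

open Levenshtein

private lemma lev_nil_eq {α} [DecidableEq α] (u : List α) :
    levenshtein defaultCost ([] : List α) u = u.length := by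
  induction u with
  | nil => simp
  | cons a u ih => simp [ih]; omega

private lemma lev_insert_le {α} [DecidableEq α] (xs : List α) (a : α) (u : List α) :
    levenshtein defaultCost xs (a :: u) ≤ 1 + levenshtein defaultCost xs u := by
  cases xs with
  | nil => simp
  | cons x xs =>
    rw [levenshtein_cons_cons]
    exact (min_le_right _ _).trans ((min_le_left _ _).trans (by simp))

private lemma lev_delete_le {α} [DecidableEq α] (x : α) (xs : List α) (u : List α) :
    levenshtein defaultCost (x :: xs) u ≤ 1 + levenshtein defaultCost xs u := by
  cases u with
  | nil => simp
  | cons a u =>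
    rw [levenshtein_cons_cons]
    exact (min_le_left _ _).trans (by simp)

private lemma lev_sub_le {α} [DecidableEq α] (x : α) (xs : List α) (a : α) (u : List α) :
    levenshtein defaultCost (x :: xs) (a :: u) ≤
      (if x = a then 0 else 1) + levenshtein defaultCost xs u := by
  rw [levenshtein_cons_cons]
  exact (min_le_right _ _).trans ((min_le_right _ _).trans (by simp))

section Chain

variable {α : Type*} [DecidableEq α] (w : List α)

private lemma chain_trans_some (q q' : Fin (w.length + 1)) (b : α) :
    (chain w).trans q (some b) q' =
      if h : (q' : ℕ) = (q : ℕ) + 1 then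
        (if b = w.get ⟨q, by have := q'.isLt; omega⟩ then 0 else 1)
      else if q' = q then 1 else ⊤ := rfl

private lemma chain_trans_none (q q' : Fin (w.length + 1)) :
    (chain w).trans q none q' = if (q' : ℕ) = (q : ℕ) + 1 then 1 else ⊤ := rfl

private lemma chain_accept (q : Fin (w.length + 1)) :
    (chain w).accept q = if q = Fin.last w.length then 0 else ⊤ := rfl

/-- Lower bound: every path weight is at least the levenshtein distance. -/
private lemma chain_lower {q : Fin (w.length + 1)} {u : List α} {v : ℝ≥0∞}
    (h : (chain w).PathWeight q u v) :
    ((levenshtein defaultCost (w.drop q) u : ℕ) : ℝ≥0∞) ≤ v := by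
  induction h with
  | accept q =>
    rw [chain_accept]
    split
    · rename_i hq
      subst hq
      simp [List.drop_length]
    · exact le_top
  | step q q' a u v h ih =>
    rw [chain_trans_some]
    split
    · rename_i hq
      have hqlt : (q : ℕ) < w.length := by have := q'.isLt; omega
      have hdrop : w.drop q = w[(q : ℕ)] :: w.drop ((q : ℕ) + 1) :=
        List.drop_eq_getElem_cons hqlt
      rw [hdrop]
      have hih : ((levenshtein defaultCost (w.drop ((q : ℕ) + 1)) u : ℕ) : ℝ≥0∞) ≤ v := by
        rwa [hq] at ih
      calc ((levenshtein defaultCost (w[(q : ℕ)] :: w.drop ((q : ℕ) + 1)) (a :: u) : ℕ) : ℝ≥0∞)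
          ≤ (((if w[(q : ℕ)] = a then 0 else 1) +
              levenshtein defaultCost (w.drop ((q : ℕ) + 1)) u : ℕ) : ℝ≥0∞) := by
            exact_mod_cast lev_sub_le _ _ _ _
        _ = (if a = w.get ⟨q, by omega⟩ then 0 else 1) +
              ((levenshtein defaultCost (w.drop ((q : ℕ) + 1)) u : ℕ) : ℝ≥0∞) := by
            push_cast
            congr 1
            simp only [List.get_eq_getElem]
            by_cases hab : a = w[(q : ℕ)] <;> simp [hab, eq_comm]
        _ ≤ _ := add_le_add_right hih _
    · split
      · rename_i _ hq
        rw [hq] at ih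
        calc ((levenshtein defaultCost (w.drop q) (a :: u) : ℕ) : ℝ≥0∞)
            ≤ ((1 + levenshtein defaultCost (w.drop q) u : ℕ) : ℝ≥0∞) := by
              exact_mod_cast lev_insert_le _ _ _
          _ = 1 + ((levenshtein defaultCost (w.drop q) u : ℕ) : ℝ≥0∞) := by push_cast; ring
          _ ≤ 1 + v := add_le_add_right ih _
      · simp
  | eps q q' u v h ih =>
    rw [chain_trans_none]
    split
    · rename_i hq
      have hqlt : (q : ℕ) < w.length := by have := q'.isLt; omega
      have hdrop : w.drop q = w[(q : ℕ)] :: w.drop ((q : ℕ) + 1) :=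
        List.drop_eq_getElem_cons hqlt
      have hih : ((levenshtein defaultCost (w.drop ((q : ℕ) + 1)) u : ℕ) : ℝ≥0∞) ≤ v := by
        rwa [hq] at ih
      rw [hdrop]
      calc ((levenshtein defaultCost (w[(q : ℕ)] :: w.drop ((q : ℕ) + 1)) u : ℕ) : ℝ≥0∞)
          ≤ ((1 + levenshtein defaultCost (w.drop ((q : ℕ) + 1)) u : ℕ) : ℝ≥0∞) := by
            exact_mod_cast lev_delete_le _ _ _
        _ = 1 + ((levenshtein defaultCost (w.drop ((q : ℕ) + 1)) u : ℕ) : ℝ≥0∞) := by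
            push_cast; ring
        _ ≤ 1 + v := add_le_add_right hih _
    · simp

/-- Path realizing |u| insertions from the last state. -/
private lemma chain_path_last (u : List α) :
    (chain w).PathWeight (Fin.last w.length) u ((u.length : ℕ) : ℝ≥0∞) := by
  induction u with
  | nil =>
    have h := WFA.PathWeight.accept (M := chain w) (Fin.last w.length)
    rw [chain_accept] at h
    simpa using h
  | cons a u ih =>
    have h := WFA.PathWeight.step (M := chain w) (Fin.last w.length) (Fin.last w.length)
      a u _ ih
    have ht : (chain w).trans (Fin.last w.length) (some a) (Fin.last w.length) = 1 := by
      rw [chain_trans_some]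
      rw [dif_neg (by simp), if_pos rfl]
    rw [ht] at h
    have : ((((a :: u).length : ℕ)) : ℝ≥0∞) = 1 + ((u.length : ℕ) : ℝ≥0∞) := by
      rw [List.length_cons]; push_cast; ring
    rwa [this]

/-- Upper bound: a path attaining the levenshtein distance exists. -/
private lemma chain_upper (m : ℕ) :
    ∀ (q : Fin (w.length + 1)) (u : List α), (w.length - (q : ℕ)) + u.length ≤ m →
    (chain w).PathWeight q u ((levenshtein defaultCost (w.drop q) u : ℕ) : ℝ≥0∞) := by
  induction m with
  | zero =>
    intro q u hm
    have hq : (q : ℕ) = w.length := by have := q.isLt; omega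
    have hu : u = [] := by
      cases u with
      | nil => rfl
      | cons a u => simp at hm
    subst hu
    have hql : q = Fin.last w.length := Fin.ext hq
    subst hql
    have h := WFA.PathWeight.accept (M := chain w) (Fin.last w.length)
    rw [chain_accept] at h
    simpa [List.drop_length] using h
  | succ m ih =>
    intro q u hm
    rcases Nat.lt_or_ge (q : ℕ) w.length with hqlt | hqge
    · -- q < length
      set q' : Fin (w.length + 1) := ⟨(q : ℕ) + 1, by omega⟩ with hq'
      have hq'v : ((q' : ℕ)) = (q : ℕ) + 1 := rfl
      have hdrop : w.drop q = w[(q : ℕ)] :: w.drop ((q : ℕ) + 1) :=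
        List.drop_eq_getElem_cons hqlt
      cases u with
      | nil =>
        have hp := WFA.PathWeight.eps (M := chain w) q q' [] _ (ih q' [] (by simp [hq'v]; omega))
        rw [chain_trans_none, if_pos hq'v] at hp
        rw [hdrop, levenshtein_cons_nil]
        have : (((defaultCost.delete w[(q : ℕ)] +
            levenshtein defaultCost (w.drop ((q : ℕ) + 1)) [] : ℕ)) : ℝ≥0∞)
            = 1 + ((levenshtein defaultCost (w.drop ((q' : ℕ))) [] : ℕ) : ℝ≥0∞) := by
          rw [hq'v]; push_cast; simp [Levenshtein.defaultCost]
        rw [this]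
        exact hp
      | cons a us =>
        have hmeas1 : (w.length - (q' : ℕ)) + (a :: us).length ≤ m := by
          simp only [hq'v, List.length_cons] at *; omega
        have hmeas2 : (w.length - (q : ℕ)) + us.length ≤ m := by
          simp only [List.length_cons] at hm; omega
        have hmeas3 : (w.length - (q' : ℕ)) + us.length ≤ m := by
          simp only [hq'v, List.length_cons] at *; omega
        -- three candidate paths
        have hpd := WFA.PathWeight.eps (M := chain w) q q' (a :: us) _ (ih q' (a :: us) hmeas1)
        rw [chain_trans_none, if_pos hq'v] at hpd
        have hpi := WFA.PathWeight.step (M := chain w) q q a us _ (ih q us hmeas2)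
        have hti : (chain w).trans q (some a) q = 1 := by
          rw [chain_trans_some, dif_neg (by omega), if_pos rfl]
        rw [hti] at hpi
        have hps := WFA.PathWeight.step (M := chain w) q q' a us _ (ih q' us hmeas3)
        have hts : (chain w).trans q (some a) q' =
            if w[(q : ℕ)] = a then 0 else 1 := by
          rw [chain_trans_some, dif_pos hq'v]
          simp only [List.get_eq_getElem]
          by_cases hab : a = w[(q : ℕ)] <;> simp [hab, eq_comm]
        rw [hts] at hps
        -- the minimum
        have hmin : levenshtein defaultCost (w.drop q) (a :: us) =
            min (1 + levenshtein defaultCost (w.drop ((q : ℕ) + 1)) (a :: us))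
              (min (1 + levenshtein defaultCost (w.drop q) us)
                ((if w[(q : ℕ)] = a then 0 else 1) +
                  levenshtein defaultCost (w.drop ((q : ℕ) + 1)) us)) := by
          conv_lhs => rw [hdrop]
          rw [levenshtein_cons_cons, ← hdrop]
          simp [Levenshtein.defaultCost]
        set c : ℕ := if w[(q : ℕ)] = a then 0 else 1 with hc
        have hcases : levenshtein defaultCost (w.drop q) (a :: us) =
              1 + levenshtein defaultCost (w.drop ((q : ℕ) + 1)) (a :: us) ∨
            levenshtein defaultCost (w.drop q) (a :: us) =
              1 + levenshtein defaultCost (w.drop q) us ∨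
            levenshtein defaultCost (w.drop q) (a :: us) =
              c + levenshtein defaultCost (w.drop ((q : ℕ) + 1)) us := by
          omega
        rcases hcases with hcase | hcase | hcase
        · rw [hcase]
          have : ((1 + levenshtein defaultCost (w.drop ((q : ℕ) + 1)) (a :: us) : ℕ) : ℝ≥0∞)
              = 1 + ((levenshtein defaultCost (w.drop (q' : ℕ)) (a :: us) : ℕ) : ℝ≥0∞) := by
            rw [hq'v]; push_cast; ring
          rw [this]; exact hpd
        · rw [hcase]
          have : ((1 + levenshtein defaultCost (w.drop q) us : ℕ) : ℝ≥0∞)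
              = 1 + ((levenshtein defaultCost (w.drop (q : ℕ)) us : ℕ) : ℝ≥0∞) := by
            push_cast; ring
          rw [this]; exact hpi
        · rw [hcase]
          have : ((c + levenshtein defaultCost (w.drop ((q : ℕ) + 1)) us : ℕ) : ℝ≥0∞)
              = (if w[(q : ℕ)] = a then 0 else 1) +
                ((levenshtein defaultCost (w.drop (q' : ℕ)) us : ℕ) : ℝ≥0∞) := by
            rw [hq'v, hc]
            split_ifs <;> push_cast <;> ring
          rw [this]; exact hps
    · -- q = length
      have hq : (q : ℕ) = w.length := by have := q.isLt; omega
      have hql : q = Fin.last w.length := Fin.ext hq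
      subst hql
      have h := chain_path_last w u
      have : ((levenshtein defaultCost (w.drop (Fin.last w.length : ℕ)) u : ℕ) : ℝ≥0∞)
          = ((u.length : ℕ) : ℝ≥0∞) := by
        simp [Fin.val_last, List.drop_length, lev_nil_eq]
      rw [this]
      exact h

end Chain

/-- The stringsum of any string `u` under the chain WFA built from `w` equals the
Levenshtein edit distance from `w` to `u`. -/
theorem chain_stringsum_eq_levenshtein {α : Type*} [DecidableEq α] (w u : List α) :
    (chain w).stringsum u = ((levenshtein Levenshtein.defaultCost w u : ℕ) : ℝ≥0∞) := by
  have hstart : (chain w).start = (0 : Fin (w.length + 1)) := rfl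
  have h0 : (((0 : Fin (w.length + 1)) : ℕ)) = 0 := rfl
  unfold WFA.stringsum
  apply le_antisymm
  · apply sInf_le
    have h := chain_upper w (w.length + u.length) 0 u (by rw [h0]; omega)
    rw [h0, List.drop_zero] at h
    show (chain w).PathWeight (chain w).start u _
    rw [hstart]
    exact h
  · refine le_sInf fun v hv => ?_
    rw [hstart] at hv
    have h := chain_lower w hv
    rwa [h0, List.drop_zero] at h

end Stmt8
end

section
/- For a WDFA over a closed semiring, the backward weight of the start state (the allsum z = β[q_0]) decomposes over string lengths when computed in the binning semiring: for each 0 ≤ n ≤ D, the n-th component z_n equals the base-semiring sum, over all accepting paths from q_0 that scan exactly n symbols, of the product of their transition weights times the accept weight of their final state. -/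
namespace Stmt19

/-- A weighted partial deterministic finite automaton with weights in a semiring `K`. -/
structure WDFA (α Q K : Type*) where
  trans : Q → α → Option (Q × K)
  start : Q
  accept : Q → K

variable {α Q K : Type*} [Semiring K]

/-- The base-semiring weight of the path from `q` scanning `w`: the product of its
transition weights times the accept weight of its final state (`0` if the path does not
exist, which contributes nothing to sums since `0` is absorbing). -/
def baseWeight (M : WDFA α Q K) : Q → List α → K
  | q, [] => M.accept q
  | q, a :: u =>
    match M.trans q a with
    | some p => p.2 * baseWeight M p.1 u
    | none => 0

/-- The vector in `K^{D+1}` supported at index `j` with value `c`. -/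
def e (D : ℕ) (j : ℕ) (c : K) : Fin (D + 1) → K :=
  fun k => if (k : ℕ) = j then c else 0

/-- Truncated convolution multiplication in the binning semiring over `K`. -/
def bmul (D : ℕ) (u v : Fin (D + 1) → K) : Fin (D + 1) → K :=
  fun i => ∑ j ∈ Finset.Iic i, u j * v (i - j)

/-- The binning-semiring weight of the path from `q` scanning `w`, where every transition
weight `c` is the vector supported on index 1 with value `c` and every accept weight is a
vector supported on index 0. -/
def liftWeight (M : WDFA α Q K) (D : ℕ) : Q → List α → (Fin (D + 1) → K)
  | q, [] => e D 0 (M.accept q)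
  | q, a :: u =>
    match M.trans q a with
    | some p => bmul D (e D 1 p.2) (liftWeight M D p.1 u)
    | none => fun _ => 0

lemma lift_eq (M : WDFA α Q K) (D : ℕ) (w : List α) : ∀ (q : Q) (n : Fin (D + 1)),
    liftWeight M D q w n = if w.length = (n : ℕ) then baseWeight M q w else 0 := by
  induction w with
  | nil =>
    intro q n
    simp only [liftWeight, baseWeight, e, List.length_nil]
    rcases eq_or_ne (n : ℕ) 0 with h | h <;> simp [h, eq_comm]
  | cons a u ih =>
    intro q n
    simp only [liftWeight, baseWeight, List.length_cons]
    cases htr : M.trans q a with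
    | none => simp
    | some p =>
      simp only [bmul]
      rcases Nat.eq_zero_or_pos (n : ℕ) with h0 | h0
      · have hz : ∀ j ∈ Finset.Iic n, e D 1 p.2 j * liftWeight M D p.1 u (n - j) = 0 := by
          intro j hj
          have : (j : ℕ) ≤ (n : ℕ) := Fin.le_def.mp (Finset.mem_Iic.mp hj)
          have : (j : ℕ) ≠ 1 := by omega
          simp [e, this]
        rw [Finset.sum_eq_zero hz]
        have : u.length + 1 ≠ (n : ℕ) := by omega
        simp [this]
      · have hD : 1 ≤ D := by have := n.isLt; omega
        set j₁ : Fin (D + 1) := ⟨1, by omega⟩ with hj₁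
        have hmem : j₁ ∈ Finset.Iic n := Finset.mem_Iic.mpr (by
          show (j₁ : ℕ) ≤ (n : ℕ); simp [hj₁]; omega)
        rw [Finset.sum_eq_single_of_mem j₁ hmem (fun b _ hb => by
          have : (b : ℕ) ≠ 1 := fun h => hb (Fin.ext (by simp [hj₁, h]))
          simp [e, this])]
        have hle : j₁ ≤ n := by simp [Fin.le_def, hj₁]; omega
        have hsub : ((n - j₁ : Fin (D + 1)) : ℕ) = (n : ℕ) - 1 := by
          rw [Fin.coe_sub_iff_le.mpr hle]
        rw [ih p.1 (n - j₁)]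
        simp only [e, hj₁, hsub]
        rcases eq_or_ne (u.length + 1) (n : ℕ) with he | he
        · have h2 : u.length = (n : ℕ) - 1 := by omega
          simp [h2, he, Nat.sub_add_cancel h0, ← hj₁, hsub]
        · have h2 : u.length ≠ (n : ℕ) - 1 := by omega
          simp [h2, he, ← hj₁, hsub]

/-- The backward weight of the start state (the allsum `z = β[q₀]`), computed in the
binning semiring as the sum over all paths from `q₀` of their binning path weights,
decomposes over string lengths: its `n`-th component equals the base-semiring sum, over
all accepting paths from `q₀` scanning exactly `n` symbols, of the product of their
transition weights times the accept weight of their final state. -/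
theorem backward_component_eq [Fintype α] [TopologicalSpace K] [T2Space K]
    (M : WDFA α Q K) (D : ℕ) (n : Fin (D + 1)) :
    (∑' w : List α, liftWeight M D M.start w n)
      = ∑' w : {w : List α // w.length = (n : ℕ)}, baseWeight M M.start (w : List α) := by
  have : ∀ w : List α, liftWeight M D M.start w n
      = Set.indicator {w : List α | w.length = (n : ℕ)} (fun w => baseWeight M M.start w) w := by
    intro w
    rw [lift_eq]
    by_cases h : w.length = (n : ℕ) <;> simp [Set.indicator, h]
  rw [tsum_congr this, ← tsum_subtype]
  rfl

end Stmt19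
end
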